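/- (MLE fails for correlated mistakes.) In the correlated-mistakes example, maximum likelihood estimation strictly prefers the meaningless classifier to the Bayes posterior classifier: for every choice of transition matrices W^1,…,W^{101} over {0,1} with strictly positive entries, the expected log-likelihood of the Bayes posterior classifier h* satisfies Σ_{c,c' ∈ {0,1}} (1/4) · log( W^1_{c,c} · Π_{m=2}^{101} W^m_{c,c'} ) ≤ 100·log(1/2), while there exist transition matrices W'^1,…,W'^{101} (namely W'^1 with all entries 1/2 and W'^m the identity for m ≥ 2) for which the expected log-likelihood of the meaningless classifier h0 satisfies Σ_{c,c'} (1/4) · log( Σ_d (1/2) · W'^1_{d,c} · Π_{m=2}^{101} W'^m_{d,c'} ) = 2·log(1/2) > 100·log(1/2). -/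

import Mathlib

/-- A transition matrix over a finite class set `C`: nonnegative entries,
every row sums to 1. -/
def IsTransitionMatrix {C : Type*} [Fintype C] (W : C → C → ℝ) : Prop :=
  (∀ c c', 0 ≤ W c c') ∧ (∀ c, ∑ c', W c c' = 1)

lemma log_row_bound (a b : ℝ) (ha : 0 < a) (hb : 0 < b) (hab : a + b = 1) :
    Real.log a + Real.log b ≤ 2 * Real.log (1 / 2) := by
  rw [← Real.log_mul ha.ne' hb.ne']
  have h1 : a * b ≤ 1 / 4 := by nlinarith [sq_nonneg (a - b)]
  calc Real.log (a * b) ≤ Real.log (1 / 4) := Real.log_le_log (by positivity) h1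
    _ = 2 * Real.log (1 / 2) := by
        rw [show (1 / 4 : ℝ) = (1 / 2) ^ 2 by norm_num, Real.log_pow]
        push_cast; ring

/-- MLE fails for correlated mistakes: in the correlated-mistakes
example, every choice of transition matrices with strictly positive entries
gives the Bayes posterior classifier expected log-likelihood at most
`100 log(1/2)`, while there exist transition matrices (`W'^1` all-`1/2`,
`W'^m` identity for `m ≥ 2`) giving the meaningless classifier `h0` expected
log-likelihood exactly `2 log(1/2) > 100 log(1/2)`.  Expert 1 is `W 0` and
expert `m ≥ 2` is `W m.succ` for `m : Fin 100`. -/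
theorem mle_fails_for_correlated_mistakes :
    (∀ W : Fin 101 → Fin 2 → Fin 2 → ℝ, (∀ m, IsTransitionMatrix (W m)) →
      (∀ m c c', 0 < W m c c') →
      ∑ c : Fin 2, ∑ c' : Fin 2,
          (1 / 4 : ℝ) * Real.log (W 0 c c * ∏ m : Fin 100, W m.succ c c') ≤
        100 * Real.log (1 / 2)) ∧
    (∃ W' : Fin 101 → Fin 2 → Fin 2 → ℝ,
      (∀ m, IsTransitionMatrix (W' m)) ∧
      (∀ d c : Fin 2, W' 0 d c = 1 / 2) ∧
      (∀ (m : Fin 100) (d c : Fin 2), W' m.succ d c = if d = c then 1 else 0) ∧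
      ∑ c : Fin 2, ∑ c' : Fin 2, (1 / 4 : ℝ) *
          Real.log (∑ d : Fin 2,
            (1 / 2 : ℝ) * W' 0 d c * ∏ m : Fin 100, W' m.succ d c') =
        2 * Real.log (1 / 2)) ∧
    100 * Real.log (1 / 2) < 2 * Real.log (1 / 2) := by
  have hlog2 : Real.log (1 / 2 : ℝ) < 0 := Real.log_neg (by norm_num) (by norm_num)
  refine ⟨?_, ?_, by linarith⟩
  · intro W hW hWpos
    -- expand each log term
    have hlog : ∀ c c' : Fin 2,
        Real.log (W 0 c c * ∏ m : Fin 100, W m.succ c c')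
          = Real.log (W 0 c c) + ∑ m : Fin 100, Real.log (W m.succ c c') := by
      intro c c'
      rw [Real.log_mul (hWpos 0 c c).ne'
        (Finset.prod_pos (fun m _ => hWpos m.succ c c')).ne',
        Real.log_prod (fun m _ => (hWpos m.succ c c').ne')]
    have expand : ∑ c : Fin 2, ∑ c' : Fin 2,
        (1 / 4 : ℝ) * Real.log (W 0 c c * ∏ m : Fin 100, W m.succ c c')
        = (1 / 2) * (Real.log (W 0 0 0) + Real.log (W 0 1 1))
          + (1 / 4) * ∑ m : Fin 100,
              ((Real.log (W m.succ 0 0) + Real.log (W m.succ 0 1))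
                + (Real.log (W m.succ 1 0) + Real.log (W m.succ 1 1))) := by
      simp only [hlog, Fin.sum_univ_two, Finset.sum_add_distrib]
      ring
    rw [expand]
    have hdiag : ∀ c : Fin 2, Real.log (W 0 c c) ≤ 0 := by
      intro c
      apply Real.log_nonpos (hWpos 0 c c).le
      have hs := (hW 0).2 c
      rw [Fin.sum_univ_two] at hs
      have h01 := (hW 0).1 c 0
      have h02 := (hW 0).1 c 1
      fin_cases c <;> simp_all <;> linarith
    have hrow : ∀ m : Fin 100,
        (Real.log (W m.succ 0 0) + Real.log (W m.succ 0 1))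
          + (Real.log (W m.succ 1 0) + Real.log (W m.succ 1 1))
        ≤ 4 * Real.log (1 / 2) := by
      intro m
      have h0 := (hW m.succ).2 0
      have h1 := (hW m.succ).2 1
      rw [Fin.sum_univ_two] at h0 h1
      have b0 := log_row_bound _ _ (hWpos m.succ 0 0) (hWpos m.succ 0 1) h0
      have b1 := log_row_bound _ _ (hWpos m.succ 1 0) (hWpos m.succ 1 1) h1
      linarith
    have hsum : ∑ m : Fin 100,
        ((Real.log (W m.succ 0 0) + Real.log (W m.succ 0 1))
          + (Real.log (W m.succ 1 0) + Real.log (W m.succ 1 1)))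
        ≤ 400 * Real.log (1 / 2) := by
      calc _ ≤ ∑ _m : Fin 100, 4 * Real.log (1 / 2) :=
            Finset.sum_le_sum (fun m _ => hrow m)
        _ = 400 * Real.log (1 / 2) := by
            rw [Finset.sum_const]; simp; ring
    linarith [hdiag 0, hdiag 1]
  · refine ⟨fun m => if m = 0 then (fun _ _ => 1 / 2)
      else (fun d c => if d = c then 1 else 0), ?_, ?_, ?_, ?_⟩
    · intro m
      by_cases h : m = 0
      · subst h
        exact ⟨fun c c' => by norm_num, fun c => by rw [Fin.sum_univ_two]; norm_num⟩
      · simp only [if_neg h]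
        refine ⟨fun c c' => by dsimp only; split <;> norm_num, fun c => ?_⟩
        rw [Fin.sum_univ_two]
        fin_cases c <;> simp
    · intro d c; simp
    · intro m d c; simp [Fin.succ_ne_zero]
    · simp only [Fin.sum_univ_two, Fin.succ_ne_zero, if_neg, if_pos]
      norm_num [Finset.prod_ite_eq, Fin.succ_ne_zero]
      rw [show (1 / 4 : ℝ) = (1 / 2) ^ 2 by norm_num, Real.log_pow]
      push_cast; ring
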